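/- arXiv:2405.14299 — 3 statements merged into one kernel-verified Lean document; each statement's English description precedes it below -/
import Mathlib

section
/- Every connected graph G with n vertices and minimum degree δ > ln(2n) has a connected dominating set on at most 6n·ln(2n)/δ vertices. -/
open Finset


lemma greedy_dom {V : Type*} [Fintype V] [Nonempty V] [DecidableEq V]
    (G : SimpleGraph V) [DecidableRel G.Adj] :
    ∀ t : ℕ, ∃ D : Finset V, D.card ≤ t ∧
      ((Finset.univ.filter (fun v => ∀ u ∈ D, ¬(u = v ∨ G.Adj u v))).card : ℝ)
        ≤ (Fintype.card V : ℝ) *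
          (1 - ((G.minDegree : ℝ) + 1) / (Fintype.card V : ℝ)) ^ t := by
  have hn0 : 0 < (Fintype.card V : ℝ) := by
    exact_mod_cast Fintype.card_pos
  have hδn : (G.minDegree : ℝ) + 1 ≤ (Fintype.card V : ℝ) := by
    obtain ⟨v⟩ := ‹Nonempty V›
    have h1 : G.minDegree ≤ G.degree v := G.minDegree_le_degree v
    have h2 : G.degree v < Fintype.card V := G.degree_lt_card_verts v
    exact_mod_cast Nat.succ_le_of_lt (lt_of_le_of_lt h1 h2)
  have hq0 : 0 ≤ 1 - ((G.minDegree : ℝ) + 1) / (Fintype.card V : ℝ) := by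
    rw [sub_nonneg, div_le_one hn0]; exact hδn
  intro t
  induction t with
  | zero =>
    refine ⟨∅, le_refl _, ?_⟩
    rw [pow_zero, mul_one]
    exact_mod_cast (Finset.card_filter_le _ _).trans (le_of_eq (Finset.card_univ))
  | succ t ih =>
    obtain ⟨D, hDc, hU⟩ := ih
    set U := Finset.univ.filter (fun v => ∀ u ∈ D, ¬(u = v ∨ G.Adj u v)) with hUdef
    by_cases hUe : U = ∅
    · refine ⟨D, hDc.trans (Nat.le_succ t), ?_⟩
      rw [← hUdef, hUe]
      simp only [Finset.card_empty, Nat.cast_zero]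
      positivity
    · -- averaging argument
      have hUne : U.Nonempty := Finset.nonempty_of_ne_empty hUe
      have hsum : (G.minDegree + 1) * U.card ≤
          ∑ v ∈ Finset.univ, (U.filter (fun u => v = u ∨ G.Adj v u)).card := by
        have hswap : ∑ v ∈ Finset.univ, (U.filter (fun u => v = u ∨ G.Adj v u)).card
            = ∑ u ∈ U, (Finset.univ.filter (fun v => v = u ∨ G.Adj v u)).card := by
          simp only [Finset.card_filter]
          rw [Finset.sum_comm]
        rw [hswap]
        have hbig : ∀ u ∈ U, G.minDegree + 1 ≤
            (Finset.univ.filter (fun v => v = u ∨ G.Adj v u)).card := by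
          intro u _
          have hsub : insert u (G.neighborFinset u) ⊆
              Finset.univ.filter (fun v => v = u ∨ G.Adj v u) := by
            intro v hv
            rcases Finset.mem_insert.mp hv with h | h
            · subst h; simp
            · rw [SimpleGraph.mem_neighborFinset] at h
              simp [h.symm]
          have hcard : (insert u (G.neighborFinset u)).card = G.degree u + 1 := by
            rw [Finset.card_insert_of_notMem (by simp), SimpleGraph.card_neighborFinset_eq_degree]
          have := Finset.card_le_card hsub
          rw [hcard] at this
          have := G.minDegree_le_degree u
          omega
        calc (G.minDegree + 1) * U.card = ∑ _u ∈ U, (G.minDegree + 1) := by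
              rw [Finset.sum_const, smul_eq_mul, mul_comm]
          _ ≤ _ := Finset.sum_le_sum hbig
      have hex : ∃ v, (G.minDegree + 1) * U.card ≤
          Fintype.card V * (U.filter (fun u => v = u ∨ G.Adj v u)).card := by
        by_contra hcon
        push_neg at hcon
        have h1 : ∑ v ∈ Finset.univ, Fintype.card V * (U.filter (fun u => v = u ∨ G.Adj v u)).card
            < ∑ _v ∈ (Finset.univ : Finset V), (G.minDegree + 1) * U.card :=
          Finset.sum_lt_sum_of_nonempty Finset.univ_nonempty (fun v _ => hcon v)
        rw [← Finset.mul_sum, Finset.sum_const, smul_eq_mul, Finset.card_univ] at h1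
        have h2 := Nat.mul_le_mul_left (Fintype.card V) hsum
        omega
      obtain ⟨v, hv⟩ := hex
      refine ⟨insert v D, (Finset.card_insert_le _ _).trans (by omega), ?_⟩
      have hU' : Finset.univ.filter (fun w => ∀ u ∈ insert v D, ¬(u = w ∨ G.Adj u w))
          = U.filter (fun w => ¬(v = w ∨ G.Adj v w)) := by
        rw [hUdef, Finset.filter_filter]
        apply Finset.filter_congr
        intro w _
        simp only [Finset.forall_mem_insert]
        tauto
      rw [hU', Finset.filter_not, Finset.card_sdiff_of_subset (Finset.filter_subset _ _)]
      have hfle : (U.filter (fun u => v = u ∨ G.Adj v u)).card ≤ U.card :=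
        Finset.card_filter_le _ _
      have hcast : ((U.card - (U.filter (fun u => v = u ∨ G.Adj v u)).card : ℕ) : ℝ)
          = (U.card : ℝ) - ((U.filter (fun u => v = u ∨ G.Adj v u)).card : ℝ) := by
        exact Nat.cast_sub hfle
      rw [hcast]
      have hvR : ((G.minDegree : ℝ) + 1) * U.card ≤
          (Fintype.card V : ℝ) * ((U.filter (fun u => v = u ∨ G.Adj v u)).card : ℝ) := by
        exact_mod_cast hv
      have hfrac : ((G.minDegree : ℝ) + 1) / (Fintype.card V : ℝ) * U.card ≤
          ((U.filter (fun u => v = u ∨ G.Adj v u)).card : ℝ) := by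
        rw [div_mul_eq_mul_div, div_le_iff₀ hn0, mul_comm ((U.filter _).card : ℝ)]
        exact hvR
      have step : (U.card : ℝ) - ((U.filter (fun u => v = u ∨ G.Adj v u)).card : ℝ)
          ≤ (1 - ((G.minDegree : ℝ) + 1) / (Fintype.card V : ℝ)) * U.card := by
        nlinarith [hfrac]
      calc (U.card : ℝ) - ((U.filter (fun u => v = u ∨ G.Adj v u)).card : ℝ)
          ≤ (1 - ((G.minDegree : ℝ) + 1) / (Fintype.card V : ℝ)) * U.card := step
        _ ≤ (1 - ((G.minDegree : ℝ) + 1) / (Fintype.card V : ℝ)) *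
            ((Fintype.card V : ℝ) * (1 - ((G.minDegree : ℝ) + 1) / (Fintype.card V : ℝ)) ^ t) :=
            mul_le_mul_of_nonneg_left hU hq0
        _ = (Fintype.card V : ℝ) * (1 - ((G.minDegree : ℝ) + 1) / (Fintype.card V : ℝ)) ^ (t+1) := by
            ring



lemma connectify {V : Type*} [Fintype V] [DecidableEq V]
    (G : SimpleGraph V) (hG : G.Connected) (D : Finset V)
    (hdom : ∀ v, ∃ u ∈ D, u = v ∨ G.Adj u v) :
    ∀ (k : ℕ) (S : Finset V), S.Nonempty → (G.induce ↑S).Connected →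
      (D \ S).card ≤ k →
      ∃ S' : Finset V, S ⊆ S' ∧ D ⊆ S' ∧ (G.induce ↑S').Connected ∧
        S'.card ≤ S.card + 3 * k := by
  intro k
  induction k with
  | zero =>
    intro S hSne hSconn hcard
    refine ⟨S, subset_rfl, ?_, hSconn, by omega⟩
    intro d hd
    by_contra hds
    have : d ∈ D \ S := Finset.mem_sdiff.mpr ⟨hd, hds⟩
    have := Finset.card_pos.mpr ⟨d, this⟩
    omega
  | succ k ih =>
    intro S hSne hSconn hcard
    by_cases hDS : D ⊆ S
    · exact ⟨S, subset_rfl, hDS, hSconn, by omega⟩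
    · classical
      obtain ⟨d₀, hd₀D, hd₀S⟩ := Finset.not_subset.mp hDS
      obtain ⟨s₀, hs₀⟩ := hSne
      -- the set of lengths of walks from S to D \ S
      have hPex : ∃ m : ℕ, ∃ s ∈ S, ∃ d ∈ D \ S, ∃ p : G.Walk s d, p.length = m := by
        obtain ⟨p⟩ := hG.preconnected s₀ d₀
        exact ⟨p.length, s₀, hs₀, d₀, Finset.mem_sdiff.mpr ⟨hd₀D, hd₀S⟩, p, rfl⟩
      set m := Nat.find hPex with hmdef
      obtain ⟨s, hsS, d, hdDS, p, hplen⟩ := Nat.find_spec hPex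
      have hmin : ∀ m' < m, ¬ ∃ s ∈ S, ∃ d ∈ D \ S, ∃ p : G.Walk s d, p.length = m' :=
        fun m' hm' => Nat.find_min hPex hm'
      -- m ≤ 3
      have hm3 : m ≤ 3 := by
        by_contra h4
        push_neg at h4
        -- destructure the walk twice
        cases p with
        | nil =>
          rw [SimpleGraph.Walk.length_nil] at hplen
          omega
        | cons h₁ p₁ =>
          rename_i a
          cases p₁ with
          | nil =>
            rw [SimpleGraph.Walk.length_cons, SimpleGraph.Walk.length_nil] at hplen
            omega
          | cons h₂ p₂ =>
            rename_i w
            rw [SimpleGraph.Walk.length_cons, SimpleGraph.Walk.length_cons] at hplen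
            have hp₂len : p₂.length = m - 2 := by omega
            by_cases hwS : w ∈ S
            · exact hmin (m - 2) (by omega) ⟨w, hwS, d, hdDS, p₂, hp₂len⟩
            · by_cases hwD : w ∈ D
              · exact hmin 2 (by omega)
                  ⟨s, hsS, w, Finset.mem_sdiff.mpr ⟨hwD, hwS⟩,
                    SimpleGraph.Walk.cons h₁ (SimpleGraph.Walk.cons h₂ SimpleGraph.Walk.nil),
                    by simp⟩
              · obtain ⟨u, huD, hu⟩ := hdom w
                have huw : G.Adj u w := by
                  rcases hu with h | h
                  · exact absurd (h ▸ huD) hwD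
                  · exact h
                by_cases huS : u ∈ S
                · exact hmin (m - 1) (by omega)
                    ⟨u, huS, d, hdDS, SimpleGraph.Walk.cons huw p₂, by
                      simp [SimpleGraph.Walk.length_cons]; omega⟩
                · exact hmin 3 (by omega)
                    ⟨s, hsS, u, Finset.mem_sdiff.mpr ⟨huD, huS⟩,
                      SimpleGraph.Walk.cons h₁ (SimpleGraph.Walk.cons h₂
                        (SimpleGraph.Walk.cons huw.symm SimpleGraph.Walk.nil)),
                      by simp⟩
      -- merge: S₁ = S ∪ support of p
      set P := p.support.toFinset with hPdef
      have hsP : s ∈ P := by simp [hPdef]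
      have hdP : d ∈ P := by simp [hPdef, SimpleGraph.Walk.end_mem_support]
      set S₁ := S ∪ P with hS₁def
      have hSS₁ : S ⊆ S₁ := Finset.subset_union_left
      have hconn₁ : (G.induce ↑S₁).Connected := by
        have hPset : (↑P : Set V) = {v | v ∈ p.support} := by
          ext v; simp [hPdef]
        have hPconn : (G.induce ↑P).Connected := by
          rw [hPset]; exact p.connected_induce_support
        have : (↑S₁ : Set V) = ↑S ∪ ↑P := by
          rw [hS₁def]; exact_mod_cast Finset.coe_union S P
        rw [this]
        exact SimpleGraph.induce_union_connected hSconn.preconnected hPconn.preconnected ⟨s, hsS, hsP⟩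
      have hcard₁ : S₁.card ≤ S.card + 3 := by
        have h1 : S₁.card ≤ S.card + (P \ S).card := by
          rw [hS₁def, ← Finset.union_sdiff_self_eq_union]
          exact Finset.card_union_le _ _
        have h2 : P \ S ⊆ P.erase s := by
          intro v hv
          obtain ⟨hvP, hvS⟩ := Finset.mem_sdiff.mp hv
          exact Finset.mem_erase.mpr ⟨fun h => hvS (h ▸ hsS), hvP⟩
        have h3 : (P.erase s).card = P.card - 1 := Finset.card_erase_of_mem hsP
        have h4 : P.card ≤ p.length + 1 := by
          rw [hPdef]
          exact (List.toFinset_card_le _).trans (by rw [SimpleGraph.Walk.length_support])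
        have h5 := Finset.card_le_card h2
        have hsPc := Finset.card_pos.mpr ⟨s, hsP⟩
        omega
      have hdk : (D \ S₁).card ≤ k := by
        have hsub : D \ S₁ ⊆ (D \ S).erase d := by
          intro v hv
          obtain ⟨hvD, hvS₁⟩ := Finset.mem_sdiff.mp hv
          refine Finset.mem_erase.mpr ⟨fun h => hvS₁ (h ▸ Finset.mem_union_right _ hdP), ?_⟩
          exact Finset.mem_sdiff.mpr ⟨hvD, fun h => hvS₁ (Finset.mem_union_left _ h)⟩
        have h1 := Finset.card_le_card hsub
        have h2 : ((D \ S).erase d).card = (D \ S).card - 1 := Finset.card_erase_of_mem hdDS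
        have h3 := Finset.card_pos.mpr ⟨d, hdDS⟩
        omega
      obtain ⟨S', hS₁S', hDS', hconn', hcard'⟩ := ih S₁ ⟨s₀, hSS₁ hs₀⟩ hconn₁ hdk
      exact ⟨S', hSS₁.trans hS₁S', hDS', hconn', by omega⟩


/-- Every connected graph G with n vertices and minimum degree δ > ln(2n) has a connected
dominating set on at most 6n·ln(2n)/δ vertices. -/
theorem exists_small_connected_dominating_set {V : Type*} [Fintype V] [Nonempty V]
    (G : SimpleGraph V) [DecidableRel G.Adj] (hG : G.Connected)
    (hδ : Real.log (2 * Fintype.card V) < G.minDegree) :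
    ∃ D : Finset V,
      (G.induce (D : Set V)).Connected ∧
      (∀ v, v ∉ D → ∃ u ∈ D, G.Adj v u) ∧
      (D.card : ℝ) ≤ 6 * Fintype.card V * Real.log (2 * Fintype.card V) / G.minDegree := by
  classical
  have hn0 : 0 < (Fintype.card V : ℝ) := by exact_mod_cast Fintype.card_pos
  have hL0 : (0:ℝ) < Real.log (2 * Fintype.card V) := by
    apply Real.log_pos
    have : (1:ℝ) ≤ (Fintype.card V : ℝ) := by exact_mod_cast Fintype.card_pos
    linarith
  have hδ0R : (0:ℝ) < (G.minDegree : ℝ) := lt_trans hL0 hδ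
  have hδ1 : 1 ≤ G.minDegree := by exact_mod_cast Nat.one_le_iff_ne_zero.mpr (by
    intro h
    rw [h] at hδ0R
    simp at hδ0R)
  have hδn : (G.minDegree : ℝ) + 1 ≤ (Fintype.card V : ℝ) := by
    obtain ⟨v⟩ := ‹Nonempty V›
    have h1 : G.minDegree ≤ G.degree v := G.minDegree_le_degree v
    have h2 : G.degree v < Fintype.card V := G.degree_lt_card_verts v
    exact_mod_cast Nat.succ_le_of_lt (lt_of_le_of_lt h1 h2)
  have hn2 : (2:ℝ) ≤ (Fintype.card V : ℝ) := by
    have : (1:ℝ) ≤ (G.minDegree : ℝ) := by exact_mod_cast hδ1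
    linarith
  have hL1 : (1:ℝ) < Real.log (2 * Fintype.card V) := by
    rw [Real.lt_log_iff_exp_lt (by linarith)]
    have := Real.exp_one_lt_d9
    linarith
  have hq0 : 0 ≤ 1 - ((G.minDegree : ℝ) + 1) / (Fintype.card V : ℝ) := by
    rw [sub_nonneg, div_le_one hn0]; exact hδn
  have hδp1 : (0:ℝ) < (G.minDegree : ℝ) + 1 := by linarith
  -- choose t
  set tR : ℝ := (Fintype.card V : ℝ) * Real.log (2 * Fintype.card V) / ((G.minDegree : ℝ) + 1)
    with htR
  have htR0 : 0 ≤ tR := by positivity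
  obtain ⟨D₀, hD₀c, hD₀U⟩ := greedy_dom G ⌈tR⌉₊
  -- decay bound
  have hdecay : (Fintype.card V : ℝ) *
      (1 - ((G.minDegree : ℝ) + 1) / (Fintype.card V : ℝ)) ^ (⌈tR⌉₊) ≤ 1/2 := by
    set q : ℝ := ((G.minDegree : ℝ) + 1) / (Fintype.card V : ℝ) with hqdef
    have hq1 : 1 - q ≤ Real.exp (-q) := by
      have := Real.add_one_le_exp (-q); linarith
    have hpow : (1-q)^(⌈tR⌉₊) ≤ Real.exp (-q) ^ (⌈tR⌉₊) := pow_le_pow_left₀ hq0 hq1 _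
    have hexp : Real.exp (-q) ^ (⌈tR⌉₊) = Real.exp (-(q * ⌈tR⌉₊)) := by
      rw [← Real.exp_nat_mul]; congr 1; ring
    have hqt : Real.log (2 * Fintype.card V) ≤ q * ⌈tR⌉₊ := by
      have h1 : tR ≤ (⌈tR⌉₊ : ℝ) := Nat.le_ceil tR
      have hqpos : 0 < q := by rw [hqdef]; positivity
      have h2 : q * tR ≤ q * ⌈tR⌉₊ := by nlinarith
      have h3 : q * tR = Real.log (2 * Fintype.card V) := by
        rw [hqdef, htR]
        field_simp
      linarith
    have h4 : Real.exp (-(q * ⌈tR⌉₊)) ≤ Real.exp (-(Real.log (2 * Fintype.card V))) :=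
      Real.exp_le_exp.mpr (by linarith)
    have h5 : Real.exp (-(Real.log (2 * Fintype.card V))) = 1 / (2 * Fintype.card V) := by
      rw [Real.exp_neg, Real.exp_log (by linarith)]
      rw [one_div]
    have h6 : (1-q)^(⌈tR⌉₊) ≤ 1 / (2 * Fintype.card V) := by
      calc (1-q)^(⌈tR⌉₊) ≤ Real.exp (-q) ^ (⌈tR⌉₊) := hpow
        _ = Real.exp (-(q * ⌈tR⌉₊)) := hexp
        _ ≤ Real.exp (-(Real.log (2 * Fintype.card V))) := h4
        _ = 1 / (2 * Fintype.card V) := h5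
    calc (Fintype.card V : ℝ) * (1-q)^(⌈tR⌉₊)
        ≤ (Fintype.card V : ℝ) * (1 / (2 * Fintype.card V)) := by nlinarith
      _ = 1/2 := by field_simp
  -- uncovered is empty
  have hUcard : (Finset.univ.filter (fun v => ∀ u ∈ D₀, ¬(u = v ∨ G.Adj u v))).card = 0 := by
    have h1 : ((Finset.univ.filter (fun v => ∀ u ∈ D₀, ¬(u = v ∨ G.Adj u v))).card : ℝ) < 1 := by
      linarith
    exact_mod_cast Nat.lt_one_iff.mp (by exact_mod_cast h1)
  have hcover : ∀ v, ∃ u ∈ D₀, u = v ∨ G.Adj u v := by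
    intro v
    by_contra hcon
    push_neg at hcon
    have hv : v ∈ Finset.univ.filter (fun v => ∀ u ∈ D₀, ¬(u = v ∨ G.Adj u v)) := by
      simp only [Finset.mem_filter, Finset.mem_univ, true_and]
      intro u hu h
      rcases h with h | h
      · exact (hcon u hu).1 h
      · exact (hcon u hu).2 h
    have := Finset.card_pos.mpr ⟨v, hv⟩
    omega
  -- D₀ nonempty
  obtain ⟨v₀⟩ := ‹Nonempty V›
  obtain ⟨a, haD₀, _⟩ := hcover v₀
  -- singleton is connected
  have hsing : (G.induce (↑({a} : Finset V) : Set V)).Connected := by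
    rw [SimpleGraph.connected_iff]
    refine ⟨?_, ⟨⟨a, by simp⟩⟩⟩
    rintro ⟨x, hx⟩ ⟨y, hy⟩
    simp only [Finset.coe_singleton, Set.mem_singleton_iff] at hx hy
    subst hx; subst hy
    exact SimpleGraph.Reachable.refl _
  obtain ⟨Df, haDf, hD₀Df, hconnf, hcardf⟩ :=
    connectify G hG D₀ hcover ((D₀ \ {a}).card) {a} ⟨a, Finset.mem_singleton_self a⟩
      hsing le_rfl
  refine ⟨Df, hconnf, ?_, ?_⟩
  · intro v hv
    obtain ⟨u, huD₀, hu⟩ := hcover v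
    rcases hu with h | h
    · exact absurd (h ▸ hD₀Df huD₀) hv
    · exact ⟨u, hD₀Df huD₀, h.symm⟩
  · -- cardinality bound
    have h1 : (D₀ \ {a}).card = D₀.card - 1 := by
      rw [Finset.sdiff_singleton_eq_erase, Finset.card_erase_of_mem haD₀]
    have h2 : 1 ≤ D₀.card := Finset.card_pos.mpr ⟨a, haD₀⟩
    have h3 : Df.card ≤ 3 * ⌈tR⌉₊ := by
      simp only [Finset.card_singleton] at hcardf
      omega
    have h4 : (⌈tR⌉₊ : ℝ) < tR + 1 := Nat.ceil_lt_add_one htR0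
    have h5 : tR ≤ (Fintype.card V : ℝ) * Real.log (2 * Fintype.card V) / (G.minDegree : ℝ) := by
      rw [htR]
      apply div_le_div_of_nonneg_left (by positivity) hδ0R (by linarith)
    have h6 : (1:ℝ) ≤ (Fintype.card V : ℝ) * Real.log (2 * Fintype.card V) / (G.minDegree : ℝ) := by
      rw [le_div_iff₀ hδ0R]
      nlinarith
    have h7 : (Df.card : ℝ) ≤ 3 * ((⌈tR⌉₊ : ℕ) : ℝ) := by exact_mod_cast h3
    have h8 : 6 * (Fintype.card V : ℝ) * Real.log (2 * Fintype.card V) / (G.minDegree : ℝ)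
        = 6 * ((Fintype.card V : ℝ) * Real.log (2 * Fintype.card V) / (G.minDegree : ℝ)) := by
      ring
    rw [h8]
    nlinarith [h4, h5, h6, h7]
end

section
/- Fix c ∈ (0, 1) and a positive integer n with cn > ln(2n). Then every graph with at most n vertices and minimum degree at least cn + 6c^{-1}·t·ln(2n) contains a dominating K_t-model. -/
/-- A *dominating K_t-model* in a graph G is a sequence (T 0, ..., T (t-1)) of pairwise
disjoint non-empty connected subgraphs of G such that for all i < j, every vertex of T j
has a neighbour (in G) in T i. -/
def SimpleGraph.IsDomKtModel {V : Type*} (G : SimpleGraph V) (t : ℕ) (T : Fin t → Set V) : Prop :=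
  (∀ i, (T i).Nonempty) ∧
  (Pairwise fun i j => Disjoint (T i) (T j)) ∧
  (∀ i, (G.induce (T i)).Connected) ∧
  (∀ i j : Fin t, i < j → ∀ v ∈ T j, ∃ u ∈ T i, G.Adj v u)

/-- G contains a dominating K_t-model. -/
def SimpleGraph.HasDomKtModel {V : Type*} (G : SimpleGraph V) (t : ℕ) : Prop :=
  ∃ T : Fin t → Set V, G.IsDomKtModel t T


section DomKtModelProof

open Relation
variable {V : Type*}

def GStep {V : Type*} (G : SimpleGraph V) (S : Finset V) (a b : V) : Prop :=
  a ∈ S ∧ b ∈ S ∧ G.Adj a b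

def ConnIn {V : Type*} (G : SimpleGraph V) (S : Finset V) : Prop :=
  ∀ a ∈ S, ∀ b ∈ S, Relation.ReflTransGen (GStep G S) a b

lemma gstep_symm (G : SimpleGraph V) (S : Finset V) : Symmetric (GStep G S) :=
  fun _ _ ⟨ha, hb, hadj⟩ => ⟨hb, ha, hadj.symm⟩

lemma rtg_symm {r : V → V → Prop} (hr : Symmetric r) {a b : V}
    (h : Relation.ReflTransGen r a b) : Relation.ReflTransGen r b a := by
  induction h with
  | refl => exact ReflTransGen.refl
  | tail _ hbc ih => exact ReflTransGen.head (hr hbc) ih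

lemma gstep_mono (G : SimpleGraph V) {S S' : Finset V} (h : S ⊆ S') {a b : V}
    (hab : ReflTransGen (GStep G S) a b) : ReflTransGen (GStep G S') a b :=
  ReflTransGen.mono (fun u w ⟨x, y, z⟩ => (⟨h x, h y, z⟩ : GStep G S' u w)) a b hab

inductive WalkN (r : V → V → Prop) : ℕ → V → V → Prop
  | refl (a : V) : WalkN r 0 a a
  | head {n : ℕ} {a b c : V} : r a b → WalkN r n b c → WalkN r (n + 1) a c

lemma WalkN.tail {r : V → V → Prop} {n : ℕ} {a b c : V}
    (h : WalkN r n a b) (hbc : r b c) : WalkN r (n + 1) a c := by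
  induction h with
  | refl a => exact WalkN.head hbc (WalkN.refl c)
  | head hab _ ih => exact WalkN.head hab (ih hbc)

lemma exists_walkN {r : V → V → Prop} {a b : V} (h : ReflTransGen r a b) :
    ∃ n, WalkN r n a b := by
  induction h with
  | refl => exact ⟨0, WalkN.refl a⟩
  | tail _ hbc ih => obtain ⟨n, hn⟩ := ih; exact ⟨n + 1, hn.tail hbc⟩


lemma dist_lemma [DecidableEq V] (G : SimpleGraph V) (K A B D0 : Finset V)
    (hA : A ⊆ K) (hAB : Disjoint A B)
    (hdom : ∀ v ∈ K, ∃ u ∈ D0, G.Adj v u)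
    (hD0 : D0 ⊆ A ∪ B) :
    ∀ L a, a ∈ A → ∀ b ∈ B, WalkN (GStep G K) L a b →
      (∃ a' ∈ A, ∃ b' ∈ B, G.Adj a' b') ∨
      (∃ a' ∈ A, ∃ b' ∈ B, ∃ v1 ∈ K, G.Adj a' v1 ∧ G.Adj v1 b') ∨
      (∃ a' ∈ A, ∃ b' ∈ B, ∃ v1 ∈ K, ∃ v2 ∈ K,
        G.Adj a' v1 ∧ G.Adj v1 v2 ∧ G.Adj v2 b') := by
  intro L
  induction L using Nat.strong_induction_on with
  | _ L ih =>
    intro a ha b hb hw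
    match L, hw with
    | 0, WalkN.refl _ => exact absurd ha (Finset.disjoint_right.mp hAB hb)
    | 1, WalkN.head hab (WalkN.refl _) =>
        exact Or.inl ⟨a, ha, b, hb, hab.2.2⟩
    | 2, WalkN.head h1 (WalkN.head h2 (WalkN.refl _)) =>
        exact Or.inr (Or.inl ⟨a, ha, b, hb, _, h1.2.1, h1.2.2, h2.2.2⟩)
    | 3, WalkN.head h1 (WalkN.head h2 (WalkN.head h3 (WalkN.refl _))) =>
        exact Or.inr (Or.inr ⟨a, ha, b, hb, _, h1.2.1, _, h2.2.1, h1.2.2, h2.2.2, h3.2.2⟩)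
    | (m+4), WalkN.head (b := v1) h1 (WalkN.head (b := v2) h2 hrest) =>
        obtain ⟨u, hu, hadj⟩ := hdom v2 h2.2.1
        rcases Finset.mem_union.mp (hD0 hu) with huA | huB
        · exact ih (m + 3) (by omega) u huA b hb
            (WalkN.head ⟨hA huA, h2.2.1, hadj.symm⟩ hrest)
        · exact Or.inr (Or.inr ⟨a, ha, u, huB, v1, h1.2.1, v2, h2.2.1,
            h1.2.2, h2.2.2, hadj⟩)


/-- vertices of `F` not reachable from `x0` within `F`. -/
noncomputable def badF (G : SimpleGraph V) (F : Finset V) (x0 : V) : Finset V :=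
  @Finset.filter _ (fun y => ¬ ReflTransGen (GStep G F) x0 y) (Classical.decPred _) F

lemma mem_badF {G : SimpleGraph V} {F : Finset V} {x0 y : V} :
    y ∈ badF G F x0 ↔ y ∈ F ∧ ¬ ReflTransGen (GStep G F) x0 y := by
  classical
  simp [badF]


lemma aug [DecidableEq V] (G : SimpleGraph V) (K D0 : Finset V) (x0 : V)
    (hdom : ∀ v ∈ K, ∃ u ∈ D0, G.Adj v u)
    (hconnK : ConnIn G K) :
    ∀ bnd : ℕ, ∀ F : Finset V, D0 ⊆ F → F ⊆ K → x0 ∈ F →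
      (badF G F x0).card ≤ bnd →
      ∃ T : Finset V, F ⊆ T ∧ T ⊆ K ∧ T.card ≤ F.card + 2 * bnd ∧
        (∀ y ∈ T, ReflTransGen (GStep G T) x0 y) := by
  intro bnd
  induction bnd with
  | zero =>
    intro F hD0F hFK hx0F hcard
    refine ⟨F, Finset.Subset.refl F, hFK, by omega, fun y hy => ?_⟩
    by_contra hbad
    have : y ∈ badF G F x0 := mem_badF.mpr ⟨hy, hbad⟩
    simp [Finset.card_eq_zero.mp (Nat.le_zero.mp hcard)] at this
  | succ bnd ihb =>
    intro F hD0F hFK hx0F hcard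
    by_cases hB : badF G F x0 = ∅
    · refine ⟨F, Finset.Subset.refl F, hFK, by omega, fun y hy => ?_⟩
      by_contra hbad
      have : y ∈ badF G F x0 := mem_badF.mpr ⟨hy, hbad⟩
      simp [hB] at this
    · -- there is an unreachable vertex b
      obtain ⟨b, hb⟩ := Finset.nonempty_iff_ne_empty.mpr hB
      set A : Finset V := F \ badF G F x0 with hAdef
      have hAmem : ∀ {y}, y ∈ A ↔ y ∈ F ∧ ReflTransGen (GStep G F) x0 y := by
        intro y
        constructor
        · intro hy
          rcases Finset.mem_sdiff.mp hy with ⟨h1, h2⟩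
          refine ⟨h1, by_contra fun hc => h2 (mem_badF.mpr ⟨h1, hc⟩)⟩
        · intro ⟨h1, h2⟩
          exact Finset.mem_sdiff.mpr ⟨h1, fun hc => (mem_badF.mp hc).2 h2⟩
      have hx0A : x0 ∈ A := hAmem.mpr ⟨hx0F, ReflTransGen.refl⟩
      have hAK : A ⊆ K := fun y hy => hFK (Finset.mem_sdiff.mp hy).1
      have hAB : Disjoint A (badF G F x0) := Finset.sdiff_disjoint
      have hbadsub : badF G F x0 ⊆ F := fun y hy => (mem_badF.mp hy).1
      have hD0AB : D0 ⊆ A ∪ badF G F x0 := by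
        rw [hAdef, Finset.sdiff_union_of_subset hbadsub]
        exact hD0F
      -- walk from x0 to b inside K
      have hbF : b ∈ F := (mem_badF.mp hb).1
      obtain ⟨L, hwalk⟩ := exists_walkN (hconnK x0 (hFK hx0F) b (hFK hbF))
      have hdist := dist_lemma G K A (badF G F x0) D0 hAK hAB hdom hD0AB L x0 hx0A b hb hwalk
      -- from each case produce S (new vertices), b' (newly connected)
      have key : ∃ S : Finset V, ↑S ⊆ (K : Set V) ∧ S.card ≤ 2 ∧
          (∀ y ∈ S, ReflTransGen (GStep G (F ∪ S)) x0 y) ∧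
          ∃ b' ∈ badF G F x0, ReflTransGen (GStep G (F ∪ S)) x0 b' := by
        rcases hdist with ⟨a', ha', b', hb', hadj⟩ |
            ⟨a', ha', b', hb', v1, hv1, h1, h2⟩ |
            ⟨a', ha', b', hb', v1, hv1, v2, hv2, h1, h2, h3⟩
        · refine ⟨∅, by simp, by simp, by simp, b', hb', ?_⟩
          have hpath : ReflTransGen (GStep G (F ∪ ∅)) x0 a' :=
            gstep_mono G (by simp) (hAmem.mp ha').2
          exact hpath.tail ⟨by simp [(hAmem.mp ha').1], by simp [(mem_badF.mp hb').1], hadj⟩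
        · have hpath : ReflTransGen (GStep G (F ∪ {v1})) x0 a' :=
            gstep_mono G Finset.subset_union_left (hAmem.mp ha').2
          have m1 : a' ∈ F ∪ {v1} := Finset.mem_union.mpr (Or.inl (hAmem.mp ha').1)
          have m2 : v1 ∈ F ∪ {v1} := by simp
          have m3 : b' ∈ F ∪ {v1} := Finset.mem_union.mpr (Or.inl (mem_badF.mp hb').1)
          have hrv1 : ReflTransGen (GStep G (F ∪ {v1})) x0 v1 := hpath.tail ⟨m1, m2, h1⟩
          refine ⟨{v1}, by simp [hv1], by simp, ?_, b', hb', hrv1.tail ⟨m2, m3, h2⟩⟩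
          intro y hy
          rcases Finset.mem_singleton.mp hy with rfl
          exact hrv1
        · have hpath : ReflTransGen (GStep G (F ∪ {v1, v2})) x0 a' :=
            gstep_mono G Finset.subset_union_left (hAmem.mp ha').2
          have hpath : ReflTransGen (GStep G (F ∪ {v1, v2})) x0 a' :=
            gstep_mono G Finset.subset_union_left (hAmem.mp ha').2
          have m1 : a' ∈ F ∪ {v1, v2} := Finset.mem_union.mpr (Or.inl (hAmem.mp ha').1)
          have m2 : v1 ∈ F ∪ {v1, v2} := by simp
          have m2' : v2 ∈ F ∪ {v1, v2} := by simp
          have m3 : b' ∈ F ∪ {v1, v2} := Finset.mem_union.mpr (Or.inl (mem_badF.mp hb').1)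
          have hrv1 : ReflTransGen (GStep G (F ∪ {v1, v2})) x0 v1 := hpath.tail ⟨m1, m2, h1⟩
          have hrv2 : ReflTransGen (GStep G (F ∪ {v1, v2})) x0 v2 := hrv1.tail ⟨m2, m2', h2⟩
          refine ⟨{v1, v2}, by simp [hv1, hv2, Set.insert_subset_iff],
            le_trans (Finset.card_insert_le _ _) (by simp), ?_, b', hb',
            hrv2.tail ⟨m2', m3, h3⟩⟩
          intro y hy
          rcases Finset.mem_insert.mp hy with rfl | hy2
          · exact hrv1
          · rcases Finset.mem_singleton.mp hy2 with rfl
            exact hrv2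
      obtain ⟨S, hSK, hScard, hSreach, b', hb', hreach⟩ := key
      set F' := F ∪ S with hF'def
      have hFF' : F ⊆ F' := Finset.subset_union_left
      have hF'K : F' ⊆ K := by
        intro y hy
        rcases Finset.mem_union.mp hy with h | h
        · exact hFK h
        · exact hSK h
      have hbad' : badF G F' x0 ⊆ (badF G F x0).erase b' := by
        intro y hy
        obtain ⟨hyF', hynr⟩ := mem_badF.mp hy
        have hyF : y ∈ F := by
          rcases Finset.mem_union.mp hyF' with h | h
          · exact h
          · exact absurd (hSreach y h) hynr
        refine Finset.mem_erase.mpr ⟨?_, mem_badF.mpr ⟨hyF, fun hr => hynr (gstep_mono G hFF' hr)⟩⟩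
        intro he; subst he; exact hynr hreach
      have hcard' : (badF G F' x0).card ≤ bnd := by
        have h1 := Finset.card_le_card hbad'
        rw [Finset.card_erase_of_mem hb'] at h1
        omega
      obtain ⟨T, hT1, hT2, hT3, hT4⟩ := ihb F' (hD0F.trans hFF') hF'K (hFF' hx0F) hcard'
      refine ⟨T, hFF'.trans hT1, hT2, ?_, hT4⟩
      have hF'card : F'.card ≤ F.card + 2 :=
        le_trans (Finset.card_union_le F S) (by omega)
      omega


lemma greedy [Fintype V] [DecidableEq V] (G : SimpleGraph V) [DecidableRel G.Adj]
    (K : Finset V) (c : ℝ) (n : ℕ) (hc0 : 0 < c) (hc1 : c < 1)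
    (hKn : (K.card : ℝ) ≤ n)
    (hdeg : ∀ v ∈ K, c * n ≤ ((K.filter (G.Adj v)).card : ℝ)) :
    ∀ m : ℕ, ∃ D : Finset V, D ⊆ K ∧ D.card ≤ m ∧
      ((K.filter (fun v => ∀ u ∈ D, ¬ G.Adj v u)).card : ℝ) ≤ (1 - c) ^ m * K.card := by
  have h1c : (0:ℝ) ≤ 1 - c := by linarith
  intro m
  induction m with
  | zero => exact ⟨∅, Finset.empty_subset K, le_refl 0, by simp⟩
  | succ m ih =>
    obtain ⟨D, hDK, hDcard, hW⟩ := ih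
    set W := K.filter (fun v => ∀ u ∈ D, ¬ G.Adj v u) with hWdef
    by_cases hWe : W = ∅
    · refine ⟨D, hDK, by omega, ?_⟩
      rw [hWdef] at hWe
      rw [hWe]
      simp only [Finset.card_empty, Nat.cast_zero]
      positivity
    · have hWne : W.Nonempty := Finset.nonempty_iff_ne_empty.mpr hWe
      have hWK : W ⊆ K := Finset.filter_subset _ _
      have hKne : K.Nonempty := ⟨hWne.choose, hWK hWne.choose_spec⟩
      -- double counting
      have hswap : ∑ w ∈ W, (K.filter (G.Adj w)).card
          = ∑ x ∈ K, (W.filter (fun w => G.Adj x w)).card := by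
        simp only [Finset.card_filter]
        rw [Finset.sum_comm]
        congr 1
        ext x
        congr 1
        ext w
        simp [G.adj_comm]
      have hsum : c * n * W.card ≤ ∑ x ∈ K, ((W.filter (fun w => G.Adj x w)).card : ℝ) := by
        have h1 : ∀ w ∈ W, c * n ≤ ((K.filter (G.Adj w)).card : ℝ) :=
          fun w hw => hdeg w (hWK hw)
        have h2 : c * n * W.card ≤ ∑ w ∈ W, ((K.filter (G.Adj w)).card : ℝ) := by
          calc c * n * W.card = ∑ _w ∈ W, c * n := by rw [Finset.sum_const, nsmul_eq_mul]; ring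
          _ ≤ _ := Finset.sum_le_sum h1
        calc c * n * W.card ≤ ∑ w ∈ W, ((K.filter (G.Adj w)).card : ℝ) := h2
          _ = _ := by exact_mod_cast congrArg Nat.cast hswap
      have hex : ∃ x ∈ K, c * W.card ≤ ((W.filter (fun w => G.Adj x w)).card : ℝ) := by
        by_contra hno
        push_neg at hno
        have hlt : ∑ x ∈ K, ((W.filter (fun w => G.Adj x w)).card : ℝ)
            < ∑ _x ∈ K, c * W.card := Finset.sum_lt_sum_of_nonempty hKne hno
        rw [Finset.sum_const, nsmul_eq_mul] at hlt
        have hWpos : (0:ℝ) < W.card := by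
          exact_mod_cast Finset.card_pos.mpr hWne
        have : (K.card : ℝ) * (c * W.card) ≤ c * n * W.card := by
          have := mul_le_mul_of_nonneg_right hKn (le_of_lt (mul_pos hc0 hWpos))
          linarith [this]
        linarith
      obtain ⟨x, hxK, hx⟩ := hex
      refine ⟨insert x D, Finset.insert_subset hxK hDK, ?_, ?_⟩
      · exact le_trans (Finset.card_insert_le _ _) (by omega)
      · set W' := K.filter (fun v => ∀ u ∈ insert x D, ¬ G.Adj v u) with hW'def
        set Wx := W.filter (fun w => G.Adj x w) with hWxdef
        have hsub : W' ⊆ W \ Wx := by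
          intro v hv
          obtain ⟨hvK, hvall⟩ := Finset.mem_filter.mp hv
          have hvW : v ∈ W := Finset.mem_filter.mpr
            ⟨hvK, fun u hu => hvall u (Finset.mem_insert_of_mem hu)⟩
          refine Finset.mem_sdiff.mpr ⟨hvW, fun hvWx => ?_⟩
          exact hvall x (Finset.mem_insert_self x D)
            ((G.adj_comm x v).mp (Finset.mem_filter.mp hvWx).2)
        have hcard1 : (W'.card : ℝ) ≤ (W.card : ℝ) - Wx.card := by
          have h1 : W'.card ≤ (W \ Wx).card := Finset.card_le_card hsub
          have h2 : (W \ Wx).card = W.card - Wx.card :=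
            Finset.card_sdiff_of_subset (Finset.filter_subset _ _)
          have h3 : Wx.card ≤ W.card := Finset.card_le_card (Finset.filter_subset _ _)
          rw [h2] at h1
          have h4 := (Nat.cast_le (α := ℝ)).mpr h1
          rw [Nat.cast_sub h3] at h4
          exact h4
        calc (W'.card : ℝ) ≤ (W.card : ℝ) - Wx.card := hcard1
          _ ≤ (W.card : ℝ) - c * W.card := by linarith
          _ = (1 - c) * W.card := by ring
          _ ≤ (1 - c) * ((1 - c) ^ m * K.card) := by
              exact mul_le_mul_of_nonneg_left hW h1c
          _ = (1 - c) ^ (m + 1) * K.card := by ring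


lemma conndom [Fintype V] [DecidableEq V] (G : SimpleGraph V) [DecidableRel G.Adj]
    (K : Finset V) (c : ℝ) (n m : ℕ) (hc0 : 0 < c) (hc1 : c < 1)
    (hKn : (K.card : ℝ) ≤ n)
    (hdeg : ∀ v ∈ K, c * n ≤ ((K.filter (G.Adj v)).card : ℝ))
    (hconn : ConnIn G K) (hKne : K.Nonempty)
    (hm : (1 - c) ^ m * (n : ℝ) < 1) :
    ∃ T : Finset V, T ⊆ K ∧ T.Nonempty ∧ T.card ≤ 3 * m ∧
      (∀ v ∈ K, ∃ u ∈ T, G.Adj v u) ∧ ConnIn G T := by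
  obtain ⟨D, hDK, hDcard, hW⟩ := greedy G K c n hc0 hc1 hKn hdeg m
  have h1c : (0:ℝ) ≤ (1 - c) ^ m := pow_nonneg (by linarith) m
  have hWlt : ((K.filter (fun v => ∀ u ∈ D, ¬ G.Adj v u)).card : ℝ) < 1 := by
    calc ((K.filter (fun v => ∀ u ∈ D, ¬ G.Adj v u)).card : ℝ)
        ≤ (1 - c) ^ m * K.card := hW
      _ ≤ (1 - c) ^ m * n := by exact mul_le_mul_of_nonneg_left hKn h1c
      _ < 1 := hm
  have hWempty : K.filter (fun v => ∀ u ∈ D, ¬ G.Adj v u) = ∅ := by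
    by_contra hne
    have h1 : 1 ≤ (K.filter (fun v => ∀ u ∈ D, ¬ G.Adj v u)).card :=
      Finset.card_pos.mpr (Finset.nonempty_iff_ne_empty.mpr hne)
    have : (1:ℝ) ≤ ((K.filter (fun v => ∀ u ∈ D, ¬ G.Adj v u)).card : ℝ) := by
      exact_mod_cast h1
    linarith
  have hdom : ∀ v ∈ K, ∃ u ∈ D, G.Adj v u := by
    intro v hv
    by_contra hno
    push_neg at hno
    have : v ∈ K.filter (fun v => ∀ u ∈ D, ¬ G.Adj v u) :=
      Finset.mem_filter.mpr ⟨hv, hno⟩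
    simp [hWempty] at this
  obtain ⟨v0, hv0⟩ := hKne
  obtain ⟨x0, hx0D, _⟩ := hdom v0 hv0
  have hDne : D.Nonempty := ⟨x0, hx0D⟩
  have hbnd : (badF G D x0).card ≤ D.card - 1 := by
    have hsub : badF G D x0 ⊆ D.erase x0 := by
      intro y hy
      obtain ⟨hyD, hynr⟩ := mem_badF.mp hy
      refine Finset.mem_erase.mpr ⟨?_, hyD⟩
      intro he; subst he; exact hynr ReflTransGen.refl
    calc (badF G D x0).card ≤ (D.erase x0).card := Finset.card_le_card hsub
      _ = D.card - 1 := Finset.card_erase_of_mem hx0D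
  obtain ⟨T, hDT, hTK, hTcard, hTreach⟩ :=
    aug G K D x0 hdom hconn (D.card - 1) D (Finset.Subset.refl D) hDK hx0D hbnd
  refine ⟨T, hTK, ⟨x0, hDT hx0D⟩, ?_, ?_, ?_⟩
  · have hD1 : 1 ≤ D.card := Finset.card_pos.mpr hDne
    omega
  · intro v hv
    obtain ⟨u, hu, hadj⟩ := hdom v hv
    exact ⟨u, hDT hu, hadj⟩
  · intro a ha b hb
    exact (rtg_symm (gstep_symm G T) (hTreach a ha)).trans (hTreach b hb)


lemma rec_lemma [Fintype V] [DecidableEq V] (G : SimpleGraph V) [DecidableRel G.Adj]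
    (c : ℝ) (n m : ℕ) (hc0 : 0 < c) (hc1 : c < 1) (hcn : 0 < c * n)
    (hVn : Fintype.card V ≤ n) (hm : (1 - c) ^ m * (n : ℝ) < 1) :
    ∀ k : ℕ, ∀ R : Finset V,
      (∀ v ∈ R, c * n + k * (3 * m) ≤ ((R.filter (G.Adj v)).card : ℝ)) → R.Nonempty →
      ∃ T : Fin k → Finset V, (∀ i, T i ⊆ R) ∧ (∀ i, (T i).Nonempty) ∧
        (∀ i j, i ≠ j → Disjoint (T i) (T j)) ∧ (∀ i, ConnIn G (T i)) ∧
        (∀ i j, i < j → ∀ v ∈ T j, ∃ u ∈ T i, G.Adj v u) := by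
  intro k
  induction k with
  | zero =>
    intro R _ _
    exact ⟨fun i => i.elim0, fun i => i.elim0, fun i => i.elim0,
      fun i j h => i.elim0, fun i => i.elim0, fun i => i.elim0⟩
  | succ k ih =>
    intro R hdeg hRne
    classical
    obtain ⟨v0, hv0⟩ := hRne
    set K : Finset V := R.filter (fun u => ReflTransGen (GStep G R) v0 u) with hKdef
    have hmemK : ∀ {u}, u ∈ K ↔ u ∈ R ∧ ReflTransGen (GStep G R) v0 u := by
      intro u; simp [hKdef]
    have hv0K : v0 ∈ K := hmemK.mpr ⟨hv0, ReflTransGen.refl⟩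
    have hKR : K ⊆ R := Finset.filter_subset _ _
    have hclosure : ∀ u ∈ K, ∀ w ∈ R, G.Adj u w → w ∈ K := by
      intro u hu w hw hadj
      obtain ⟨huR, hur⟩ := hmemK.mp hu
      exact hmemK.mpr ⟨hw, hur.tail ⟨huR, hw, hadj⟩⟩
    have hfilterK : ∀ v ∈ K, K.filter (G.Adj v) = R.filter (G.Adj v) := by
      intro v hv
      apply Finset.Subset.antisymm
      · exact Finset.filter_subset_filter _ hKR
      · intro w hw
        obtain ⟨hwR, hadj⟩ := Finset.mem_filter.mp hw
        exact Finset.mem_filter.mpr ⟨hclosure v hv w hwR hadj, hadj⟩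
    have hdegK : ∀ v ∈ K, c * n + (k+1) * (3 * m) ≤ ((K.filter (G.Adj v)).card : ℝ) := by
      intro v hv
      rw [hfilterK v hv]
      exact_mod_cast hdeg v (hKR hv)
    have hlift : ∀ u, ReflTransGen (GStep G R) v0 u → ReflTransGen (GStep G K) v0 u := by
      intro u h
      induction h with
      | refl => exact ReflTransGen.refl
      | tail hab hbc ih2 =>
        rename_i b c'
        have hbK : b ∈ K := hmemK.mpr ⟨hbc.1, hab⟩
        have hcK : c' ∈ K := hclosure b hbK c' hbc.2.1 hbc.2.2
        exact ih2.tail ⟨hbK, hcK, hbc.2.2⟩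
    have hsymm : Symmetric (GStep G K) := fun _ _ ⟨x, y, z⟩ => ⟨y, x, z.symm⟩
    have hconnK : ConnIn G K := fun a ha b hb =>
      (rtg_symm hsymm (hlift a (hmemK.mp ha).2)).trans (hlift b (hmemK.mp hb).2)
    have hKn : (K.card : ℝ) ≤ n := by
      have h1 : K.card ≤ Fintype.card V := Finset.card_le_univ K
      exact_mod_cast le_trans h1 hVn
    have h3m : (0:ℝ) ≤ (3 * m : ℕ) := by positivity
    have hdegK' : ∀ v ∈ K, c * n ≤ ((K.filter (G.Adj v)).card : ℝ) := by
      intro v hv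
      have := hdegK v hv
      have hge : (0:ℝ) ≤ ((k+1) : ℕ) * (3 * m : ℕ) := by positivity
      push_cast at this ⊢
      nlinarith
    obtain ⟨T0, hT0K, hT0ne, hT0card, hT0dom, hT0conn⟩ :=
      conndom G K c n m hc0 hc1 hKn hdegK' hconnK ⟨v0, hv0K⟩ hm
    -- the next vertex pool
    set R' : Finset V := K \ T0 with hR'def
    have hR'K : R' ⊆ K := Finset.sdiff_subset
    -- degrees within R'
    have hdegR' : ∀ v ∈ R', c * n + k * (3 * m) ≤ ((R'.filter (G.Adj v)).card : ℝ) := by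
      intro v hv
      have hvK : v ∈ K := hR'K hv
      have hfil : K.filter (G.Adj v) \ T0 ⊆ R'.filter (G.Adj v) := by
        intro w hw
        obtain ⟨hw1, hw2⟩ := Finset.mem_sdiff.mp hw
        obtain ⟨hwK, hadj⟩ := Finset.mem_filter.mp hw1
        exact Finset.mem_filter.mpr ⟨Finset.mem_sdiff.mpr ⟨hwK, hw2⟩, hadj⟩
      have hcard1 : (K.filter (G.Adj v)).card ≤ (K.filter (G.Adj v) \ T0).card + T0.card := by
        have := Finset.card_sdiff_add_card (K.filter (G.Adj v)) T0
        have h2 : (K.filter (G.Adj v)).card ≤ (K.filter (G.Adj v) ∪ T0).card :=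
          Finset.card_le_card Finset.subset_union_left
        omega
      have hcard2 : (K.filter (G.Adj v) \ T0).card ≤ (R'.filter (G.Adj v)).card :=
        Finset.card_le_card hfil
      have hKdeg := hdegK v hvK
      have hT0c : (T0.card : ℝ) ≤ (3 * m : ℕ) := by exact_mod_cast hT0card
      have e1 : ((K.filter (G.Adj v)).card : ℝ)
          ≤ ((R'.filter (G.Adj v)).card : ℝ) + T0.card := by
        have : (K.filter (G.Adj v)).card ≤ (R'.filter (G.Adj v)).card + T0.card := by omega
        exact_mod_cast this
      push_cast at hKdeg hT0c e1 ⊢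
      nlinarith
    -- R' is nonempty
    have hKcard : c * n + (3 * m : ℕ) + 1 ≤ (K.card : ℝ) := by
      have hsub : insert v0 (K.filter (G.Adj v0)) ⊆ K := by
        intro w hw
        rcases Finset.mem_insert.mp hw with rfl | hw2
        · exact hv0K
        · exact Finset.filter_subset _ _ hw2
      have hns : v0 ∉ K.filter (G.Adj v0) := by
        intro h
        exact (G.loopless.irrefl v0) (Finset.mem_filter.mp h).2
      have hcard3 : (K.filter (G.Adj v0)).card + 1 ≤ K.card := by
        have := Finset.card_insert_of_notMem hns
        have h2 := Finset.card_le_card hsub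
        omega
      have hdv0 := hdegK v0 hv0K
      have e2 : ((K.filter (G.Adj v0)).card : ℝ) + 1 ≤ (K.card : ℝ) := by exact_mod_cast hcard3
      have hge : (1:ℝ) * ((3*m:ℕ):ℝ) ≤ ((k+1) : ℕ) * ((3 * m : ℕ):ℝ) := by
        apply mul_le_mul_of_nonneg_right _ h3m
        exact_mod_cast Nat.one_le_iff_ne_zero.mpr (Nat.succ_ne_zero k)
      push_cast at hdv0 hge e2 ⊢
      nlinarith
    have hR'ne : R'.Nonempty := by
      have hlt : T0.card < K.card := by
        have hT0c : (T0.card : ℝ) ≤ ((3 * m : ℕ) : ℝ) := by exact_mod_cast hT0card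
        have : (T0.card : ℝ) < K.card := by nlinarith
        exact_mod_cast this
      have := Finset.card_sdiff_of_subset hT0K
      rw [← hR'def] at this
      refine Finset.card_pos.mp (by omega)
    obtain ⟨T', hT'sub, hT'ne, hT'disj, hT'conn, hT'dom⟩ := ih R' hdegR' hR'ne
    -- assemble
    refine ⟨Fin.cons T0 T', ?_, ?_, ?_, ?_, ?_⟩
    · intro i
      induction i using Fin.cases with
      | zero => simpa using hT0K.trans hKR
      | succ i => simpa using (hT'sub i).trans (hR'K.trans hKR)
    · intro i
      induction i using Fin.cases with
      | zero => simpa using hT0ne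
      | succ i => simpa using hT'ne i
    · intro i j hij
      induction i using Fin.cases with
      | zero =>
        induction j using Fin.cases with
        | zero => exact absurd rfl hij
        | succ j =>
          simp only [Fin.cons_zero, Fin.cons_succ]
          refine Finset.disjoint_left.mpr fun x hx hx2 => ?_
          exact (Finset.mem_sdiff.mp (hT'sub j hx2)).2 hx
      | succ i =>
        induction j using Fin.cases with
        | zero =>
          simp only [Fin.cons_zero, Fin.cons_succ]
          refine Finset.disjoint_right.mpr fun x hx hx2 => ?_
          exact (Finset.mem_sdiff.mp (hT'sub i hx2)).2 hx
        | succ j =>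
          simp only [Fin.cons_succ]
          refine hT'disj i j fun he => hij ?_
          rw [he]
    · intro i
      induction i using Fin.cases with
      | zero => simpa using hT0conn
      | succ i => simpa using hT'conn i
    · intro i j hij v hv
      induction j using Fin.cases with
      | zero =>
        rw [Fin.lt_def] at hij
        exact absurd hij (by simp)
      | succ j =>
        induction i using Fin.cases with
        | zero =>
          simp only [Fin.cons_zero]
          simp only [Fin.cons_succ] at hv
          exact hT0dom v (hR'K (hT'sub j hv))
        | succ i =>
          simp only [Fin.cons_succ] at hv ⊢
          exact hT'dom i j (Fin.succ_lt_succ_iff.mp hij) v hv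


lemma reach_of_rtg (G : SimpleGraph V) (S : Finset V) {a b : V}
    (hr : ReflTransGen (GStep G S) a b) :
    ∀ (ha : a ∈ (↑S : Set V)) (hb : b ∈ (↑S : Set V)),
      (G.induce (↑S : Set V)).Reachable ⟨a, ha⟩ ⟨b, hb⟩ := by
  induction hr with
  | refl => intro ha hb; exact SimpleGraph.Reachable.refl _
  | tail hab hbc ih =>
    intro ha hb
    have hxS : _ ∈ (↑S : Set V) := hbc.1
    exact (ih ha hxS).trans (SimpleGraph.Adj.reachable (by exact hbc.2.2))

lemma connIn_induce (G : SimpleGraph V) (S : Finset V) (hne : S.Nonempty)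
    (h : ConnIn G S) : (G.induce (↑S : Set V)).Connected := by
  rw [SimpleGraph.connected_iff]
  constructor
  · rintro ⟨a, ha⟩ ⟨b, hb⟩
    exact reach_of_rtg G S (h a ha b hb) ha hb
  · obtain ⟨x, hx⟩ := hne
    exact ⟨⟨x, hx⟩⟩


end DomKtModelProof

/-- Fix c ∈ (0, 1) and a positive integer n with cn > ln(2n).  Then every graph with at most
n vertices and minimum degree at least cn + 6c⁻¹·t·ln(2n) contains a dominating K_t-model. -/
theorem hasDomKtModel_of_linear_minDegree (c : ℝ) (hc0 : 0 < c) (hc1 : c < 1)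
    (n : ℕ) (hn : 0 < n) (hcn : Real.log (2 * n) < c * n)
    {V : Type*} [Fintype V] [Nonempty V] (G : SimpleGraph V) [DecidableRel G.Adj]
    (hV : Fintype.card V ≤ n) (t : ℕ)
    (hδ : ∀ v, c * n + 6 * c⁻¹ * t * Real.log (2 * n) ≤ (G.degree v : ℝ)) :
    G.HasDomKtModel t := by
  classical
  rcases Nat.eq_zero_or_pos t with rfl | ht
  · exact ⟨fun i => i.elim0, fun i => i.elim0, fun i j h => (i.elim0 : _),
      fun i => i.elim0, fun i => i.elim0⟩
  -- basic log facts
  have h2n : (2:ℝ) ≤ 2 * n := by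
    have : (1:ℝ) ≤ n := by exact_mod_cast hn
    linarith
  have hlog2n_pos : 0 < Real.log (2 * n) := by
    apply Real.log_pos; linarith
  have hcinv : 0 < c⁻¹ := inv_pos.mpr hc0
  have hcnpos : 0 < c * n := lt_trans hlog2n_pos hcn
  -- rule out n = 1
  rcases Nat.lt_or_ge n 2 with hn1 | hn2
  · exfalso
    have hn1' : n = 1 := by omega
    subst hn1'
    obtain ⟨v⟩ := ‹Nonempty V›
    have hdeg := hδ v
    have hdlt : G.degree v < Fintype.card V := G.degree_lt_card_verts v
    have hd0 : G.degree v = 0 := by omega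
    rw [hd0] at hdeg
    have h6 : 0 ≤ 6 * c⁻¹ * t * Real.log (2 * 1) := by positivity
    push_cast at hdeg
    nlinarith
  -- main case: n ≥ 2
  have hlog_ge1 : 1 < Real.log (2 * n) := by
    have h4 : (4:ℝ) ≤ 2 * n := by
      have : (2:ℝ) ≤ n := by exact_mod_cast hn2
      linarith
    have : Real.log 4 ≤ Real.log (2 * n) := Real.log_le_log (by norm_num) h4
    have hl4 : 1 < Real.log 4 := by
      have h42 : (4:ℝ) = 2 ^ 2 := by norm_num
      rw [h42, Real.log_pow]
      have := Real.log_two_gt_d9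
      push_cast
      nlinarith
    linarith
  set m : ℕ := ⌈Real.log (2 * n) / c⌉₊ with hmdef
  have hx_pos : 0 < Real.log (2 * n) / c := div_pos hlog2n_pos hc0
  have hm_ge : Real.log (2 * n) / c ≤ (m : ℝ) := Nat.le_ceil _
  have hm_le : (m : ℝ) < Real.log (2 * n) / c + 1 :=
    Nat.ceil_lt_add_one (le_of_lt hx_pos)
  -- (1-c)^m * n < 1
  have hgeom : (1 - c) ^ m * (n : ℝ) < 1 := by
    have h1c0 : (0:ℝ) ≤ 1 - c := by linarith
    have hpow : (1 - c) ^ m ≤ Real.exp (-c) ^ m := by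
      apply pow_le_pow_left₀ h1c0
      have := Real.add_one_le_exp (-c)
      linarith
    have hexp : Real.exp (-c) ^ m = Real.exp (m * (-c)) := by
      rw [← Real.exp_nat_mul]
    have hcm : Real.log (2 * n) ≤ c * m := by
      have := mul_le_mul_of_nonneg_left hm_ge (le_of_lt hc0)
      calc Real.log (2 * n) = c * (Real.log (2 * n) / c) := by
            field_simp
        _ ≤ c * m := this
    have hnlt : (n:ℝ) < Real.exp (c * m) := by
      have hnpos : (0:ℝ) < n := by exact_mod_cast hn
      have h1 : Real.log n < Real.log (2 * n) := by
        apply Real.log_lt_log hnpos; linarith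
      have h2 : Real.log n < c * m := lt_of_lt_of_le h1 hcm
      calc (n:ℝ) = Real.exp (Real.log n) := (Real.exp_log hnpos).symm
        _ < Real.exp (c * m) := Real.exp_lt_exp.mpr h2
    calc (1 - c) ^ m * (n : ℝ) ≤ Real.exp (m * (-c)) * n := by
          rw [← hexp]
          apply mul_le_mul_of_nonneg_right hpow (by positivity)
      _ < Real.exp (m * (-c)) * Real.exp (c * m) := by
          apply mul_lt_mul_of_pos_left hnlt (Real.exp_pos _)
      _ = 1 := by rw [← Real.exp_add]; ring_nf; exact Real.exp_zero
  -- min degree gives the budget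
  have hbudget : ∀ v, c * n + t * (3 * m) ≤ ((Finset.univ.filter (G.Adj v)).card : ℝ) := by
    intro v
    have hfil : Finset.univ.filter (G.Adj v) = G.neighborFinset v := by
      ext w
      simp [SimpleGraph.mem_neighborFinset]
    rw [hfil]
    have hdeg := hδ v
    have hdd : (G.neighborFinset v).card = G.degree v := rfl
    rw [hdd]
    refine le_trans ?_ hdeg
    have key : (t:ℝ) * (3 * m) ≤ 6 * c⁻¹ * t * Real.log (2 * n) := by
      have hm3 : (m:ℝ) ≤ Real.log (2 * n) / c + 1 := le_of_lt hm_le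
      have hone : (1:ℝ) ≤ Real.log (2 * n) / c := by
        rw [le_div_iff₀ hc0]
        nlinarith
      have htpos : (0:ℝ) ≤ t := by positivity
      have h1 : (3:ℝ) * m ≤ 3 * (Real.log (2 * n) / c) + 3 := by linarith
      have h2 : (3:ℝ) ≤ 3 * (Real.log (2 * n) / c) := by linarith
      have h3 : (3:ℝ) * m ≤ 6 * (Real.log (2 * n) / c) := by linarith
      calc (t:ℝ) * (3 * m) ≤ (t:ℝ) * (6 * (Real.log (2 * n) / c)) := by
            apply mul_le_mul_of_nonneg_left h3 htpos
        _ = 6 * c⁻¹ * t * Real.log (2 * n) := by field_simp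
    push_cast
    linarith [key]
  obtain ⟨T, hTsub, hTne, hTdisj, hTconn, hTdom⟩ :=
    rec_lemma G c n m hc0 hc1 hcnpos hV hgeom t Finset.univ
      (by intro v _; exact hbudget v) Finset.univ_nonempty
  refine ⟨fun i => ↑(T i), fun i => ?_, fun i j hij => ?_, fun i => ?_, ?_⟩
  · exact Finset.coe_nonempty.mpr (hTne i)
  · exact Finset.disjoint_coe.mpr (hTdisj i j hij)
  · exact connIn_induce G (T i) (hTne i) (hTconn i)
  · intro i j hij v hv
    obtain ⟨u, hu, hadj⟩ := hTdom i j hij v hv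
    exact ⟨u, hu, hadj⟩
end

section
/- There exists t_0 such that for every integer t ≥ t_0 and for d = ⌈4t·ln t⌉, every non-empty d-regular graph contains a dominating pseudo-K_t-model. -/
set_option maxHeartbeats 1000000
set_option linter.unusedSectionVars false
set_option linter.unusedVariables false

open Finset


section LLL

variable {ι κ : Type*} [Fintype ι] [DecidableEq ι] [Fintype κ] [DecidableEq κ]

/-- Event `A` is determined by the coordinates in `s`. -/
def DetBy (A : Finset (ι → κ)) (s : Finset ι) : Prop :=
  ∀ f g : ι → κ, (∀ a ∈ s, f a = g a) → f ∈ A → g ∈ A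

lemma DetBy.mono {A : Finset (ι → κ)} {s s' : Finset ι} (h : DetBy A s) (hs : s ⊆ s') :
    DetBy A s' := fun f g hfg => h f g fun a ha => hfg a (hs ha)

lemma card_inter_mul_card_univ {A B : Finset (ι → κ)} {s : Finset ι}
    (hA : DetBy A s) (hB : DetBy B sᶜ) :
    ((A ∩ B).card : ℝ) * ((univ : Finset (ι → κ)).card : ℝ) = (A.card : ℝ) * (B.card : ℝ) := by
  have key : ((A ∩ B) ×ˢ (univ : Finset (ι → κ))).card = (A ×ˢ B).card := by
    apply Finset.card_nbij' (fun p => (s.piecewise p.1 p.2, s.piecewise p.2 p.1))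
      (fun p => (s.piecewise p.1 p.2, s.piecewise p.2 p.1))
    · rintro ⟨f, g⟩ hfg
      simp only [mem_coe, mem_product, mem_inter, mem_univ, and_true] at hfg ⊢
      obtain ⟨hfA, hfB⟩ := hfg
      constructor
      · exact hA f _ (fun a ha => (s.piecewise_eq_of_mem _ _ ha).symm) hfA
      · refine hB f _ (fun a ha => ?_) hfB
        rw [mem_compl] at ha
        exact (s.piecewise_eq_of_notMem _ _ ha).symm
    · rintro ⟨f, g⟩ hfg
      simp only [mem_coe, mem_product, mem_inter, mem_univ, and_true] at hfg ⊢
      obtain ⟨hfA, hgB⟩ := hfg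
      refine ⟨?_, ?_⟩
      · exact hA f _ (fun a ha => (s.piecewise_eq_of_mem _ _ ha).symm) hfA
      · refine hB g _ (fun a ha => ?_) hgB
        rw [mem_compl] at ha
        exact (s.piecewise_eq_of_notMem _ _ ha).symm
    · rintro ⟨f, g⟩ -
      ext a <;> by_cases ha : a ∈ s <;>
        simp [Finset.piecewise_eq_of_mem, Finset.piecewise_eq_of_notMem, ha]
    · rintro ⟨f, g⟩ -
      ext a <;> by_cases ha : a ∈ s <;>
        simp [Finset.piecewise_eq_of_mem, Finset.piecewise_eq_of_notMem, ha]
  have := congrArg (Nat.cast (R := ℝ)) key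
  rwa [Finset.card_product, Finset.card_product, Nat.cast_mul, Nat.cast_mul] at this

variable (A : ι → Finset (ι → κ)) (Dset : ι → Finset ι)

/-- Intersection of the complements of the events in `S`. -/
def CC (S : Finset ι) : Finset (ι → κ) := univ \ S.biUnion A

lemma mem_CC {S : Finset ι} {f : ι → κ} : f ∈ CC A S ↔ ∀ j ∈ S, f ∉ A j := by
  simp [CC]

lemma CC_anti {S S' : Finset ι} (h : S ⊆ S') : CC A S' ⊆ CC A S := by
  intro f hf
  rw [mem_CC] at hf ⊢
  exact fun j hj => hf j (h hj)

lemma CC_empty : CC A ∅ = univ := by simp [CC]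

lemma CC_insert (j : ι) (S : Finset ι) : CC A (insert j S) = CC A S \ A j := by
  ext f
  simp only [mem_CC, mem_sdiff, mem_insert]
  constructor
  · intro h; exact ⟨fun k hk => h k (Or.inr hk), h j (Or.inl rfl)⟩
  · rintro ⟨h1, h2⟩ k hk
    rcases hk with rfl | hk
    · exact h2
    · exact h1 k hk

lemma detBy_CC (hdet : ∀ v, DetBy (A v) (Dset v)) (S : Finset ι) :
    DetBy (CC A S) (S.biUnion Dset) := by
  intro f g hfg hf
  rw [mem_CC] at hf ⊢
  intro j hj hg
  refine hf j hj (hdet j g f (fun a ha => ?_) hg)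
  exact (hfg a (mem_biUnion.2 ⟨j, hj, ha⟩)).symm

variable {x : ℝ}

lemma lll_sub (hx0 : 0 ≤ x) (hx1 : x ≤ 1) {m : ℕ}
    (hmain : ∀ S : Finset ι, S.card ≤ m → ∀ i ∉ S,
      (((A i ∩ CC A S).card : ℝ)) ≤ x * ((CC A S).card : ℝ))
    (S₂ : Finset ι) (T : Finset ι) (hdisj : Disjoint T S₂)
    (hcard : S₂.card + T.card ≤ m + 1) :
    (1 - x) ^ T.card * ((CC A S₂).card : ℝ) ≤ ((CC A (S₂ ∪ T)).card : ℝ) := by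
  induction T using Finset.induction_on with
  | empty => simp
  | @insert j T hjT ih =>
    have hjS₂ : j ∉ S₂ := fun h =>
      (Finset.disjoint_left.1 hdisj (mem_insert_self j T)) h
    have hdisj' : Disjoint T S₂ := Finset.disjoint_of_subset_left (subset_insert j T) hdisj
    have hcardins : (insert j T).card = T.card + 1 := card_insert_of_notMem hjT
    have hcard' : S₂.card + T.card ≤ m + 1 := by omega
    have hjU : j ∉ S₂ ∪ T := by
      simp only [mem_union]; push_neg; exact ⟨hjS₂, hjT⟩
    have hUcard : (S₂ ∪ T).card ≤ m := by
      calc (S₂ ∪ T).card ≤ S₂.card + T.card := card_union_le _ _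
        _ ≤ m := by omega
    have hmainU := hmain (S₂ ∪ T) hUcard j hjU
    -- card of (CC (S₂ ∪ T) \ A j)
    have hsplit : ((CC A (S₂ ∪ T) ∩ A j).card : ℝ) + ((CC A (S₂ ∪ T) \ A j).card : ℝ)
        = ((CC A (S₂ ∪ T)).card : ℝ) := by
      exact_mod_cast congrArg (Nat.cast (R := ℝ))
        (Finset.card_inter_add_card_sdiff (CC A (S₂ ∪ T)) (A j))
    have hIC : ((CC A (S₂ ∪ T) ∩ A j).card : ℝ) ≤ x * ((CC A (S₂ ∪ T)).card : ℝ) := by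
      rw [inter_comm]; exact hmainU
    have hge : (1 - x) * ((CC A (S₂ ∪ T)).card : ℝ) ≤ ((CC A (S₂ ∪ T) \ A j).card : ℝ) := by
      nlinarith [hsplit, hIC]
    have heq : CC A (S₂ ∪ insert j T) = CC A (S₂ ∪ T) \ A j := by
      rw [Finset.union_insert, CC_insert]
    rw [heq, hcardins]
    have ihh := ih hdisj' hcard'
    calc (1 - x) ^ (T.card + 1) * ((CC A S₂).card : ℝ)
        = (1 - x) * ((1 - x) ^ T.card * ((CC A S₂).card : ℝ)) := by ring
      _ ≤ (1 - x) * ((CC A (S₂ ∪ T)).card : ℝ) := by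
          apply mul_le_mul_of_nonneg_left ihh (by linarith)
      _ ≤ ((CC A (S₂ ∪ T) \ A j).card : ℝ) := hge

end LLL

section LLL2

variable {ι κ : Type*} [Fintype ι] [DecidableEq ι] [Fintype κ] [DecidableEq κ]
  (A : ι → Finset (ι → κ)) (Dset : ι → Finset ι)

variable {x : ℝ} {Dg : ℕ}

lemma lll_step [Nonempty κ]
    (hdet : ∀ v, DetBy (A v) (Dset v))
    (hdep : ∀ v : ι, (univ.filter (fun w => w ≠ v ∧ ¬ Disjoint (Dset v) (Dset w))).card ≤ Dg)
    (hx0 : 0 < x) (hx1 : x < 1)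
    (hp : ∀ v, ((A v).card : ℝ) ≤ x * (1 - x) ^ Dg * ((univ : Finset (ι → κ)).card : ℝ)) :
    ∀ n : ℕ, ∀ S : Finset ι, S.card ≤ n → ∀ i ∉ S,
      ((A i ∩ CC A S).card : ℝ) ≤ x * ((CC A S).card : ℝ) := by
  classical
  have hu : (0 : ℝ) < ((univ : Finset (ι → κ)).card : ℝ) := by
    exact_mod_cast Finset.card_pos.2 Finset.univ_nonempty
  intro n
  induction n with
  | zero =>
    intro S hS i hi
    have hSempty : S = ∅ := Finset.card_eq_zero.1 (Nat.le_zero.1 hS)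
    subst hSempty
    rw [CC_empty, Finset.inter_univ]
    calc ((A i).card : ℝ) ≤ x * (1 - x) ^ Dg * ((univ : Finset (ι → κ)).card : ℝ) := hp i
      _ ≤ x * 1 * ((univ : Finset (ι → κ)).card : ℝ) := by
          apply mul_le_mul_of_nonneg_right _ (le_of_lt hu)
          apply mul_le_mul_of_nonneg_left _ (le_of_lt hx0)
          exact pow_le_one₀ (by linarith) (by linarith)
      _ = x * ((univ : Finset (ι → κ)).card : ℝ) := by ring
  | succ n ih =>
    intro S hS i hi
    set S₁ := S.filter (fun j => ¬ Disjoint (Dset i) (Dset j)) with hS₁def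
    set S₂ := S.filter (fun j => Disjoint (Dset i) (Dset j)) with hS₂def
    have hunion : S₂ ∪ S₁ = S := filter_union_filter_not_eq _ S
    have hdisj12 : Disjoint S₂ S₁ := disjoint_filter_filter_not S S _
    have hcards : S₂.card + S₁.card = S.card := by
      rw [← card_union_of_disjoint hdisj12, hunion]
    -- S₁ is small
    have hS₁card : S₁.card ≤ Dg := by
      refine le_trans (card_le_card ?_) (hdep i)
      intro j hj
      simp only [hS₁def, mem_filter] at hj
      simp only [mem_filter, mem_univ, true_and]
      exact ⟨fun h => hi (h ▸ hj.1), hj.2⟩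
    -- step 1 : restrict to S₂
    have hsub : A i ∩ CC A S ⊆ A i ∩ CC A S₂ :=
      inter_subset_inter le_rfl (CC_anti A (filter_subset _ _))
    have step1 : ((A i ∩ CC A S).card : ℝ) ≤ ((A i ∩ CC A S₂).card : ℝ) := by
      exact_mod_cast card_le_card hsub
    -- step 2 : independence
    have hBdet : DetBy (CC A S₂) (Dset i)ᶜ := by
      refine (detBy_CC A Dset hdet S₂).mono ?_
      intro a ha
      rw [mem_biUnion] at ha
      obtain ⟨j, hj, haj⟩ := ha
      rw [mem_compl]
      simp only [hS₂def, mem_filter] at hj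
      exact fun hai => (Finset.disjoint_left.1 hj.2 hai) haj
    have step2 : ((A i ∩ CC A S₂).card : ℝ) * ((univ : Finset (ι → κ)).card : ℝ)
        = ((A i).card : ℝ) * ((CC A S₂).card : ℝ) :=
      card_inter_mul_card_univ (hdet i) hBdet
    have step3 : ((A i ∩ CC A S₂).card : ℝ) ≤ x * (1 - x) ^ Dg * ((CC A S₂).card : ℝ) := by
      rw [← mul_le_mul_iff_of_pos_right hu, step2, mul_right_comm]
      exact mul_le_mul_of_nonneg_right (hp i) (Nat.cast_nonneg _)
    -- step 4 : power comparison
    have step4 : x * (1 - x) ^ Dg * ((CC A S₂).card : ℝ)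
        ≤ x * ((1 - x) ^ S₁.card * ((CC A S₂).card : ℝ)) := by
      rw [← mul_assoc]
      apply mul_le_mul_of_nonneg_right _ (Nat.cast_nonneg _)
      apply mul_le_mul_of_nonneg_left _ (le_of_lt hx0)
      exact pow_le_pow_of_le_one (by linarith) (by linarith) hS₁card
    -- step 5 : lll_sub
    have step5 : (1 - x) ^ S₁.card * ((CC A S₂).card : ℝ) ≤ ((CC A S).card : ℝ) := by
      have := lll_sub A (le_of_lt hx0) (le_of_lt hx1) (m := n) ih S₂ S₁ hdisj12.symm
        (by omega)
      rwa [hunion] at this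
    calc ((A i ∩ CC A S).card : ℝ) ≤ ((A i ∩ CC A S₂).card : ℝ) := step1
      _ ≤ x * (1 - x) ^ Dg * ((CC A S₂).card : ℝ) := step3
      _ ≤ x * ((1 - x) ^ S₁.card * ((CC A S₂).card : ℝ)) := step4
      _ ≤ x * ((CC A S).card : ℝ) := mul_le_mul_of_nonneg_left step5 (le_of_lt hx0)

lemma lll [Nonempty κ]
    (hdet : ∀ v, DetBy (A v) (Dset v))
    (hdep : ∀ v : ι, (univ.filter (fun w => w ≠ v ∧ ¬ Disjoint (Dset v) (Dset w))).card ≤ Dg)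
    (hx0 : 0 < x) (hx1 : x < 1)
    (hp : ∀ v, ((A v).card : ℝ) ≤ x * (1 - x) ^ Dg * ((univ : Finset (ι → κ)).card : ℝ)) :
    ∃ f : ι → κ, ∀ v, f ∉ A v := by
  classical
  have hu : (0 : ℝ) < ((univ : Finset (ι → κ)).card : ℝ) := by
    exact_mod_cast Finset.card_pos.2 Finset.univ_nonempty
  have hmain := lll_step A Dset hdet hdep hx0 hx1 hp (Fintype.card ι)
  have h := lll_sub A (le_of_lt hx0) (le_of_lt hx1) hmain ∅ univ (disjoint_empty_right _)
    (by simp)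
  rw [Finset.empty_union, CC_empty] at h
  have hpos : (0 : ℝ) < ((CC A univ).card : ℝ) := by
    refine lt_of_lt_of_le ?_ h
    exact mul_pos (pow_pos (by linarith) _) hu
  have : (CC A univ).Nonempty := Finset.card_pos.1 (by exact_mod_cast hpos)
  obtain ⟨f, hf⟩ := this
  exact ⟨f, fun v => (mem_CC A).1 hf v (mem_univ v)⟩

end LLL2


open Real in
lemma numeric_ineq (t d : ℕ) (ht : 2000000 ≤ t)
    (hdl : 4 * (t : ℝ) * Real.log t ≤ d)
    (hdu : (d : ℝ) ≤ 4 * (t : ℝ) * Real.log t + 1) (hd1 : 1 ≤ d) :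
    (t : ℝ) * ((t : ℝ) - 1) ^ d ≤
      (1 / (((d ^ 2 : ℕ) : ℝ) + 1)) * (1 - 1 / (((d ^ 2 : ℕ) : ℝ) + 1)) ^ (d ^ 2 : ℕ)
        * (t : ℝ) ^ d := by
  have hT2 : (2 : ℝ) ≤ (t : ℝ) := by exact_mod_cast le_trans (by norm_num) ht
  have hT0 : (0 : ℝ) < (t : ℝ) := by linarith
  have hT1 : (1 : ℝ) < (t : ℝ) := by linarith
  have hL0 : 0 < Real.log t := Real.log_pos hT1
  have hT6 : (2000000 : ℝ) ≤ (t : ℝ) := by exact_mod_cast ht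
  set T := (t : ℝ) with hTdef
  have hTne : T ≠ 0 := ne_of_gt hT0
  set L := Real.log T with hLdef
  -- Step A: (T-1)^d ≤ T^d * exp(-(d:ℝ)/T)
  have hA : (T - 1) ^ d ≤ T ^ d * Real.exp (-(d : ℝ) / T) := by
    have h1 : T - 1 ≤ T * Real.exp (-1 / T) := by
      have h := mul_le_mul_of_nonneg_left (Real.add_one_le_exp (-1 / T)) hT0.le
      have key : T * (-1 / T + 1) = T - 1 := by field_simp; ring
      linarith
    calc (T - 1) ^ d ≤ (T * Real.exp (-1 / T)) ^ d := by
          apply pow_le_pow_left₀ (by linarith) h1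
      _ = T ^ d * (Real.exp (-1 / T)) ^ d := mul_pow _ _ _
      _ = T ^ d * Real.exp (-(d : ℝ) / T) := by
          rw [← Real.exp_nat_mul]
          rw [show (d : ℝ) * (-1 / T) = -(d : ℝ) / T by ring]
  -- Step B: exp(-(d:ℝ)/T) ≤ 1 / T^4
  have hB : Real.exp (-(d : ℝ) / T) ≤ 1 / T ^ 4 := by
    have h1 : 4 * L ≤ (d : ℝ) / T := by
      rw [le_div_iff₀ hT0]
      calc 4 * L * T = 4 * T * L := by ring
        _ ≤ (d : ℝ) := hdl
    have h2 : Real.exp (-(d : ℝ) / T) ≤ Real.exp (-(4 * L)) := by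
      apply Real.exp_le_exp.2
      have : (-(d:ℝ)) / T ≤ -(4*L) := by
        rw [neg_div]
        linarith
      linarith [this]
    have h3 : Real.exp (-(4 * L)) = 1 / T ^ 4 := by
      rw [Real.exp_neg]
      rw [show (4 : ℝ) * L = (4 : ℕ) * L by norm_num, Real.exp_nat_mul, Real.exp_log hT0]
      simp
    calc Real.exp (-(d : ℝ) / T) ≤ Real.exp (-(4 * L)) := h2
      _ = 1 / T ^ 4 := h3
  -- combine: LHS ≤ T^d / T^3
  have hLHS : T * (T - 1) ^ d ≤ T ^ d / T ^ 3 := by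
    calc T * (T - 1) ^ d ≤ T * (T ^ d * (1 / T ^ 4)) := by
          apply mul_le_mul_of_nonneg_left _ (le_of_lt hT0)
          calc (T - 1) ^ d ≤ T ^ d * Real.exp (-(d : ℝ) / T) := hA
            _ ≤ T ^ d * (1 / T ^ 4) := by
                apply mul_le_mul_of_nonneg_left hB (by positivity)
      _ = T ^ d / T ^ 3 := by field_simp
  -- Step C: (1-x)^D ≥ 1/3 where D = d^2, x = 1/(D+1)
  set D : ℕ := d ^ 2 with hDdef
  have hD1 : (1 : ℝ) ≤ (D : ℝ) := by
    have : 1 ≤ D := Nat.one_le_pow _ _ (by omega)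
    exact_mod_cast this
  have hD0 : (0 : ℝ) < (D : ℝ) := by linarith
  have hDp1 : (0 : ℝ) < (D : ℝ) + 1 := by linarith
  set x : ℝ := 1 / ((D : ℝ) + 1) with hxdef
  have hx0 : 0 < x := by positivity
  have hpow : (1 : ℝ) / 3 ≤ (1 - x) ^ D := by
    have h1mx : 1 - x = (D : ℝ) / ((D : ℝ) + 1) := by
      rw [hxdef]; field_simp; ring
    have hup : (((D : ℝ) + 1) / (D : ℝ)) ^ D ≤ 3 := by
      have he : ((D : ℝ) + 1) / (D : ℝ) = 1 + 1 / (D : ℝ) := by field_simp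
      have hle : 1 + 1 / (D : ℝ) ≤ Real.exp (1 / (D : ℝ)) := by
        have := Real.add_one_le_exp (1 / (D : ℝ))
        linarith
      calc (((D : ℝ) + 1) / (D : ℝ)) ^ D ≤ (Real.exp (1 / (D : ℝ))) ^ D := by
            apply pow_le_pow_left₀ (by positivity) (he ▸ hle)
        _ = Real.exp ((D : ℕ) * (1 / (D : ℝ))) := (Real.exp_nat_mul _ _).symm
        _ = Real.exp 1 := by
            congr 1
            field_simp
        _ ≤ 3 := by linarith [Real.exp_one_lt_d9]
    have hppos : (0 : ℝ) < (((D : ℝ) + 1) / (D : ℝ)) ^ D := by positivity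
    have hinv : (1 - x) ^ D = 1 / ((((D : ℝ) + 1) / (D : ℝ)) ^ D) := by
      rw [h1mx, one_div, ← inv_pow, inv_div]
    rw [hinv]
    exact one_div_le_one_div_of_le hppos hup
  -- Step D/E: 3 * (D + 1) ≤ T^3
  have hE : Real.log T ≤ 4 * Real.sqrt (Real.sqrt T) := by
    have h0 : (0:ℝ) ≤ T := hT0.le
    have h1 : Real.log (Real.sqrt (Real.sqrt T)) ≤ Real.sqrt (Real.sqrt T) - 1 :=
      Real.log_le_sub_one_of_pos (by positivity)
    have h2 : Real.log (Real.sqrt (Real.sqrt T)) = Real.log T / 4 := by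
      rw [Real.log_sqrt (Real.sqrt_nonneg T), Real.log_sqrt h0]
      ring
    have h3 : Real.sqrt (Real.sqrt T) - 1 ≤ Real.sqrt (Real.sqrt T) := by linarith
    linarith [h1, h2 ▸ h1]
  have hL2 : L ^ 2 ≤ 16 * Real.sqrt T := by
    have h4 : L ^ 2 ≤ (4 * Real.sqrt (Real.sqrt T)) ^ 2 := by
      apply pow_le_pow_left₀ hL0.le
      exact hE
    have h5 : (4 * Real.sqrt (Real.sqrt T)) ^ 2 = 16 * Real.sqrt T := by
      rw [mul_pow, Real.sq_sqrt (Real.sqrt_nonneg T)]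
      norm_num
    linarith
  have hsqrtT : (1248 : ℝ) ≤ Real.sqrt T := by
    rw [show (1248:ℝ) = Real.sqrt (1248^2) by rw [Real.sqrt_sq (by norm_num)]]
    apply Real.sqrt_le_sqrt
    have : (1248:ℝ)^2 = 1557504 := by norm_num
    rw [this]
    calc (1557504 : ℝ) ≤ 2000000 := by norm_num
      _ ≤ T := hT6
  have hLT : 78 * L ^ 2 ≤ T := by
    have : 78 * (16 * Real.sqrt T) ≤ Real.sqrt T * Real.sqrt T := by
      have := Real.sqrt_nonneg T
      nlinarith [hsqrtT]
    have hss : Real.sqrt T * Real.sqrt T = T := Real.mul_self_sqrt hT0.le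
    nlinarith [hL2]
  have hL1 : 1 ≤ L := by
    rw [hLdef, Real.le_log_iff_exp_le hT0]
    have := Real.exp_one_lt_d9
    linarith
  have hTL1 : 1 ≤ T * L := by nlinarith [hT2, hL1]
  have hDbound : (D : ℝ) ≤ 25 * T ^ 2 * L ^ 2 := by
    have hcast : (D : ℝ) = (d : ℝ) ^ 2 := by rw [hDdef]; push_cast; ring
    have h5 : (d : ℝ) ≤ 5 * T * L := by linarith [hdu, hTL1]
    rw [hcast]
    nlinarith [Nat.cast_nonneg (α := ℝ) d, h5]
  have h3D : 3 * ((D : ℝ) + 1) ≤ 78 * T ^ 2 * L ^ 2 := by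
    nlinarith [hDbound, hTL1]
  have hT3 : 78 * T ^ 2 * L ^ 2 ≤ T ^ 3 := by nlinarith [hLT, sq_nonneg T, hT0]
  have hx_ineq : 1 / T ^ 3 ≤ x * (1 - x) ^ D := by
    have h1 : x * (1 / 3) ≤ x * (1 - x) ^ D := mul_le_mul_of_nonneg_left hpow hx0.le
    have h2 : x * (1 / 3) = 1 / (3 * ((D : ℝ) + 1)) := by
      rw [hxdef]; field_simp
    have h3 : 1 / T ^ 3 ≤ 1 / (3 * ((D : ℝ) + 1)) := by
      apply one_div_le_one_div_of_le
      · positivity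
      · linarith [h3D, hT3]
    linarith
  calc T * (T - 1) ^ d ≤ T ^ d / T ^ 3 := hLHS
    _ = T ^ d * (1 / T ^ 3) := by ring
    _ ≤ T ^ d * (x * (1 - x) ^ D) := by
        apply mul_le_mul_of_nonneg_left hx_ineq (by positivity)
    _ = x * (1 - x) ^ D * T ^ d := by ring

section App
variable {V : Type} [Fintype V] [DecidableEq V] (G : SimpleGraph V) [DecidableRel G.Adj]

def badEvent (t : ℕ) (v : V) : Finset (V → Fin t) :=
  univ.filter (fun f => ∃ i : Fin t, ∀ u ∈ G.neighborFinset v, f u ≠ i)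

lemma badEvent_card (t : ℕ) (v : V) :
    (badEvent G t v).card ≤
      t * (t - 1) ^ (G.neighborFinset v).card * t ^ ((G.neighborFinset v)ᶜ.card) := by
  classical
  set N := G.neighborFinset v with hN
  have hsub : badEvent G t v ⊆ univ.biUnion (fun i : Fin t =>
      Fintype.piFinset (fun a => if a ∈ N then ({i}ᶜ : Finset (Fin t)) else univ)) := by
    intro f hf
    rw [badEvent, mem_filter] at hf
    obtain ⟨-, i, hi⟩ := hf
    rw [mem_biUnion]
    refine ⟨i, mem_univ i, ?_⟩
    rw [Fintype.mem_piFinset]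
    intro a
    by_cases ha : a ∈ N
    · simp only [ha, if_pos, mem_compl, mem_singleton]
      exact hi a ha
    · simp [ha]
  have hcard : ∀ i : Fin t,
      (Fintype.piFinset (fun a => if a ∈ N then ({i}ᶜ : Finset (Fin t)) else univ)).card
        = (t - 1) ^ N.card * t ^ (Nᶜ.card) := by
    intro i
    rw [Fintype.card_piFinset]
    have hsplit : (∏ a ∈ N, (if a ∈ N then ({i}ᶜ : Finset (Fin t)) else univ).card) *
        (∏ a ∈ Nᶜ, (if a ∈ N then ({i}ᶜ : Finset (Fin t)) else univ).card)
        = ∏ a, (if a ∈ N then ({i}ᶜ : Finset (Fin t)) else univ).card :=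
      Finset.prod_mul_prod_compl N _
    rw [← hsplit]
    congr 1
    · rw [Finset.prod_congr rfl (fun a ha => by rw [if_pos ha]), Finset.prod_const]
      congr 1
      rw [card_compl, card_singleton, Fintype.card_fin]
    · rw [Finset.prod_congr rfl (fun a ha => by rw [if_neg (mem_compl.1 ha)]),
        Finset.prod_const]
      congr 1
      rw [card_univ, Fintype.card_fin]
  calc (badEvent G t v).card
      ≤ (univ.biUnion (fun i : Fin t =>
          Fintype.piFinset (fun a => if a ∈ N then ({i}ᶜ : Finset (Fin t)) else univ))).card :=
        card_le_card hsub
    _ ≤ ∑ i : Fin t, (Fintype.piFinset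
          (fun a => if a ∈ N then ({i}ᶜ : Finset (Fin t)) else univ)).card :=
        card_biUnion_le
    _ = ∑ _i : Fin t, (t - 1) ^ N.card * t ^ (Nᶜ.card) := by
        exact Finset.sum_congr rfl (fun i _ => hcard i)
    _ = t * ((t - 1) ^ N.card * t ^ (Nᶜ.card)) := by
        rw [Finset.sum_const, card_univ, Fintype.card_fin, smul_eq_mul]
    _ = t * (t - 1) ^ N.card * t ^ (Nᶜ.card) := by ring

lemma badEvent_det (t : ℕ) (v : V) (f g : V → Fin t)
    (hfg : ∀ a ∈ G.neighborFinset v, f a = g a)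
    (hf : f ∈ badEvent G t v) : g ∈ badEvent G t v := by
  rw [badEvent, mem_filter] at hf ⊢
  obtain ⟨-, i, hi⟩ := hf
  refine ⟨mem_univ g, i, fun u hu => ?_⟩
  rw [← hfg u hu]
  exact hi u hu

lemma dep_bound {d : ℕ} (hreg : ∀ v : V, (G.neighborFinset v).card = d) (v : V) :
    (univ.filter (fun w => w ≠ v ∧
      ¬ Disjoint (G.neighborFinset v) (G.neighborFinset w))).card ≤ d ^ 2 := by
  have hsub : univ.filter (fun w => w ≠ v ∧
      ¬ Disjoint (G.neighborFinset v) (G.neighborFinset w)) ⊆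
      (G.neighborFinset v).biUnion (fun u => G.neighborFinset u) := by
    intro w hw
    rw [mem_filter] at hw
    obtain ⟨-, -, hnd⟩ := hw
    obtain ⟨a, hav, haw⟩ := Finset.not_disjoint_iff.1 hnd
    rw [mem_biUnion]
    refine ⟨a, hav, ?_⟩
    rw [SimpleGraph.mem_neighborFinset] at haw ⊢
    exact haw.symm
  calc (univ.filter _).card ≤ ((G.neighborFinset v).biUnion
        (fun u => G.neighborFinset u)).card := card_le_card hsub
    _ ≤ ∑ u ∈ G.neighborFinset v, (G.neighborFinset u).card := card_biUnion_le
    _ = ∑ _u ∈ G.neighborFinset v, d := Finset.sum_congr rfl (fun u _ => hreg u)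
    _ = d * d := by rw [Finset.sum_const, hreg v, smul_eq_mul]
    _ = d ^ 2 := by ring

end App

/-- A *dominating pseudo-K_t-model*: pairwise disjoint non-empty vertex subsets such that for
all i < j every vertex of T j has a neighbour in T i (no connectedness requirement). -/
def SimpleGraph.IsPseudoDomKtModel {V : Type*} (G : SimpleGraph V) (t : ℕ)
    (T : Fin t → Set V) : Prop :=
  (∀ i, (T i).Nonempty) ∧
  (Pairwise fun i j => Disjoint (T i) (T j)) ∧
  (∀ i j : Fin t, i < j → ∀ v ∈ T j, ∃ u ∈ T i, G.Adj v u)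

/-- There exists t₀ such that for every t ≥ t₀ and d = ⌈4t·ln t⌉, every non-empty d-regular
graph contains a dominating pseudo-K_t-model. -/
theorem regular_graph_has_pseudoDomKtModel :
    ∃ t₀ : ℕ, ∀ t : ℕ, t₀ ≤ t →
      ∀ {V : Type} [Fintype V] [Nonempty V] (G : SimpleGraph V) [DecidableRel G.Adj],
        G.IsRegularOfDegree ⌈4 * (t : ℝ) * Real.log t⌉₊ →
        ∃ T : Fin t → Set V, G.IsPseudoDomKtModel t T := by
  refine ⟨2000000, fun t ht V _ _ G _ hreg => ?_⟩
  classical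
  set d : ℕ := ⌈4 * (t : ℝ) * Real.log t⌉₊ with hd
  haveI : Nonempty (Fin t) := ⟨⟨0, by omega⟩⟩
  have ht1 : (1 : ℝ) < (t : ℝ) := by exact_mod_cast (by omega : 1 < t)
  have hlogpos : 0 < Real.log t := Real.log_pos ht1
  have hpos : 0 < 4 * (t : ℝ) * Real.log t := by positivity
  have hd1 : 1 ≤ d := by
    have : 0 < d := by rw [hd]; exact Nat.ceil_pos.2 hpos
    omega
  have hdl : 4 * (t : ℝ) * Real.log t ≤ d := by rw [hd]; exact Nat.le_ceil _
  have hdu : (d : ℝ) ≤ 4 * (t : ℝ) * Real.log t + 1 := by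
    rw [hd]; exact (Nat.ceil_lt_add_one hpos.le).le
  have hreg' : ∀ v : V, (G.neighborFinset v).card = d := fun v => hreg v
  set Dg : ℕ := d ^ 2 with hDg
  set x : ℝ := 1 / ((Dg : ℝ) + 1) with hx
  have hDg1 : (1 : ℝ) ≤ (Dg : ℝ) := by
    have : 1 ≤ Dg := by rw [hDg]; exact Nat.one_le_pow _ _ (by omega)
    exact_mod_cast this
  have hx0 : 0 < x := by rw [hx]; positivity
  have hx1 : x < 1 := by
    rw [hx, div_lt_one (by linarith)]; linarith
  have hnum := numeric_ineq t d ht hdl hdu hd1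
  rw [← hDg, ← hx] at hnum
  have hunivcard : ((univ : Finset (V → Fin t)).card : ℝ) = (t : ℝ) ^ (Fintype.card V) := by
    rw [card_univ, Fintype.card_fun, Fintype.card_fin]
    push_cast
    ring
  have hp : ∀ v : V, ((badEvent G t v).card : ℝ) ≤
      x * (1 - x) ^ Dg * ((univ : Finset (V → Fin t)).card : ℝ) := by
    intro v
    have h1 := badEvent_card G t v
    rw [hreg' v] at h1
    have h1R : ((badEvent G t v).card : ℝ) ≤
        (t : ℝ) * ((t : ℝ) - 1) ^ d * (t : ℝ) ^ ((G.neighborFinset v)ᶜ.card) := by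
      have := (Nat.cast_le (α := ℝ)).2 h1
      push_cast [Nat.cast_sub (by omega : 1 ≤ t)] at this
      exact this
    have h2 : (t : ℝ) * ((t : ℝ) - 1) ^ d * (t : ℝ) ^ ((G.neighborFinset v)ᶜ.card) ≤
        x * (1 - x) ^ Dg * (t : ℝ) ^ d * (t : ℝ) ^ ((G.neighborFinset v)ᶜ.card) :=
      mul_le_mul_of_nonneg_right hnum (by positivity)
    have h3 : x * (1 - x) ^ Dg * (t : ℝ) ^ d * (t : ℝ) ^ ((G.neighborFinset v)ᶜ.card) =
        x * (1 - x) ^ Dg * ((univ : Finset (V → Fin t)).card : ℝ) := by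
      rw [hunivcard, mul_assoc, ← pow_add]
      congr 2
      rw [← hreg' v]
      exact Finset.card_add_card_compl _
    linarith
  obtain ⟨f, hf⟩ := lll (badEvent G t) (fun v => G.neighborFinset v)
    (fun v => badEvent_det G t v) (dep_bound G hreg') hx0 hx1 hp
  have hgood : ∀ v : V, ∀ i : Fin t, ∃ u ∈ G.neighborFinset v, f u = i := by
    intro v i
    by_contra hc
    push_neg at hc
    exact hf v (mem_filter.2 ⟨mem_univ f, i, fun u hu => hc u hu⟩)
  refine ⟨fun i => {v | f v = i}, ?_, ?_, ?_⟩
  · intro i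
    obtain ⟨u, _, hfu⟩ := hgood (Classical.arbitrary V) i
    exact ⟨u, hfu⟩
  · intro i j hij
    rw [Set.disjoint_left]
    rintro v hvi hvj
    exact hij (hvi.symm.trans hvj)
  · intro i j _ v _
    obtain ⟨u, hu, hfu⟩ := hgood v i
    exact ⟨u, hfu, (G.mem_neighborFinset v u).1 hu⟩
end
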